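/- Let 𝔤 = 𝔨 ⊕ 𝔭 be a Cartan decomposition of a finite-dimensional real semisimple Lie algebra 𝔤, and let 𝔰 be a Lie subalgebra of 𝔤 stable under the corresponding Cartan involution, so that 𝔰 = 𝔪 ⊕ 𝔮 with 𝔪 = 𝔰 ∩ 𝔨 and 𝔮 = 𝔰 ∩ 𝔭. Set 𝔩 = [𝔮,𝔮] and 𝔥 = 𝔩 ⊕ 𝔮, and assume 𝔩 ⊆ 𝔪 and that 𝔥 is a semisimple Lie subalgebra of 𝔤. Then: 𝔩 is an ideal of 𝔪; 𝔥 is an ideal of 𝔰; the orthogonal complement 𝔲 of 𝔩 in 𝔪 with respect to the Killing form of 𝔤 is an ideal of 𝔪 and of 𝔰; and 𝔰 = 𝔲 ⊕ 𝔥 is a direct sum of ideals, so in particular [𝔲, 𝔥] = 0. -/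

import Mathlib

/-!
# Statement 11

Let `𝔤 = 𝔨 ⊕ 𝔭` be a Cartan decomposition of a finite-dimensional real semisimple Lie
algebra `𝔤` (the Killing form being negative definite on `𝔨` and positive definite on `𝔭`,
with `[𝔨,𝔨] ⊆ 𝔨`, `[𝔨,𝔭] ⊆ 𝔭`, `[𝔭,𝔭] ⊆ 𝔨`), and let `𝔰` be a Lie subalgebra of `𝔤` stable
under the corresponding Cartan involution, so that `𝔰 = 𝔪 ⊕ 𝔮` with `𝔪 = 𝔰 ∩ 𝔨` and
`𝔮 = 𝔰 ∩ 𝔭`.  Set `𝔩 = [𝔮,𝔮]` and `𝔥 = 𝔩 ⊕ 𝔮`, and assume `𝔩 ⊆ 𝔪` and that `𝔥` is a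
semisimple Lie subalgebra of `𝔤`.  Then `𝔩` is an ideal of `𝔪`, `𝔥` is an ideal of `𝔰`,
the orthogonal complement `𝔲` of `𝔩` in `𝔪` with respect to the Killing form of `𝔤` is an
ideal of `𝔪` and of `𝔰`, and `𝔰 = 𝔲 ⊕ 𝔥` is a direct sum of ideals; in particular
`[𝔲, 𝔥] = 0`.
-/

open LieAlgebra

theorem stabilizer_algebra_decomposition
    {𝔤 : Type*} [LieRing 𝔤] [LieAlgebra ℝ 𝔤] [Module.Finite ℝ 𝔤]
    [LieAlgebra.IsSemisimple ℝ 𝔤]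
    -- the Cartan decomposition 𝔤 = 𝔨 ⊕ 𝔭
    (𝔨 : LieSubalgebra ℝ 𝔤) (𝔭 : Submodule ℝ 𝔤)
    (hdec : IsCompl 𝔨.toSubmodule 𝔭)
    (h𝔨𝔭 : ∀ x ∈ 𝔨, ∀ y ∈ 𝔭, ⁅x, y⁆ ∈ 𝔭)
    (h𝔭𝔭 : ∀ x ∈ 𝔭, ∀ y ∈ 𝔭, ⁅x, y⁆ ∈ 𝔨)
    (h𝔨neg : ∀ x ∈ 𝔨, x ≠ 0 → killingForm ℝ 𝔤 x x < 0)
    (h𝔭pos : ∀ x ∈ 𝔭, x ≠ 0 → 0 < killingForm ℝ 𝔤 x x)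
    -- a subalgebra 𝔰, stable under the Cartan involution (i.e. the sum of its
    -- intersections with 𝔨 and 𝔭)
    (𝔰 : LieSubalgebra ℝ 𝔤)
    (h𝔰 : ∀ x ∈ 𝔰, ∀ xk ∈ 𝔨, ∀ xp ∈ 𝔭, x = xk + xp → xk ∈ 𝔰 ∧ xp ∈ 𝔰)
    -- 𝔪 = 𝔰 ∩ 𝔨, 𝔮 = 𝔰 ∩ 𝔭, 𝔩 = [𝔮,𝔮], 𝔥 = 𝔩 ⊕ 𝔮,
    -- 𝔲 = orthogonal complement of 𝔩 in 𝔪 for the Killing form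
    (𝔪 : LieSubalgebra ℝ 𝔤) (h𝔪 : 𝔪 = 𝔰 ⊓ 𝔨)
    (𝔮 : Submodule ℝ 𝔤) (h𝔮 : 𝔮 = 𝔰.toSubmodule ⊓ 𝔭)
    (𝔩 : Submodule ℝ 𝔤) (h𝔩 : 𝔩 = Submodule.span ℝ {z | ∃ x ∈ 𝔮, ∃ y ∈ 𝔮, z = ⁅x, y⁆})
    (𝔥 : Submodule ℝ 𝔤) (h𝔥 : 𝔥 = 𝔩 ⊔ 𝔮)
    (𝔲 : Submodule ℝ 𝔤) (h𝔲 : 𝔲 = 𝔪.toSubmodule ⊓ (killingForm ℝ 𝔤).orthogonal 𝔩)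
    -- assume 𝔩 ⊆ 𝔪 ...
    (h𝔩𝔪 : 𝔩 ≤ 𝔪.toSubmodule)
    -- ... and that 𝔥 is a semisimple Lie subalgebra of 𝔤
    (h𝔥alg : ∃ H : LieSubalgebra ℝ 𝔤, H.toSubmodule = 𝔥 ∧ LieAlgebra.IsSemisimple ℝ H) :
    -- 𝔩 is an ideal of 𝔪
    (∀ x ∈ 𝔪, ∀ y ∈ 𝔩, ⁅x, y⁆ ∈ 𝔩) ∧
    -- 𝔥 is an ideal of 𝔰
    (𝔥 ≤ 𝔰.toSubmodule ∧ ∀ x ∈ 𝔰, ∀ y ∈ 𝔥, ⁅x, y⁆ ∈ 𝔥) ∧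
    -- 𝔲 is an ideal of 𝔪 and of 𝔰
    (𝔲 ≤ 𝔪.toSubmodule ∧ (∀ x ∈ 𝔪, ∀ y ∈ 𝔲, ⁅x, y⁆ ∈ 𝔲) ∧
      ∀ x ∈ 𝔰, ∀ y ∈ 𝔲, ⁅x, y⁆ ∈ 𝔲) ∧
    -- 𝔰 = 𝔲 ⊕ 𝔥 is a direct sum of ideals, and in particular [𝔲,𝔥] = 0
    (𝔰.toSubmodule = 𝔲 ⊔ 𝔥 ∧ 𝔲 ⊓ 𝔥 = ⊥ ∧
      ∀ x ∈ 𝔲, ∀ y ∈ 𝔥, ⁅x, y⁆ = 0) := by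
  classical
  -- membership characterisations
  have hmem𝔪 : ∀ {x : 𝔤}, x ∈ 𝔪 → x ∈ 𝔰 ∧ x ∈ 𝔨 := by
    intro x hx; rw [h𝔪] at hx; exact hx
  have hmk𝔪 : ∀ {x : 𝔤}, x ∈ 𝔰 → x ∈ 𝔨 → x ∈ 𝔪 := by
    intro x h1 h2; rw [h𝔪]; exact ⟨h1, h2⟩
  have hmem𝔮 : ∀ {x : 𝔤}, x ∈ 𝔮 → x ∈ 𝔰 ∧ x ∈ 𝔭 := by
    intro x hx; rw [h𝔮] at hx; exact hx
  have hmk𝔮 : ∀ {x : 𝔤}, x ∈ 𝔰 → x ∈ 𝔭 → x ∈ 𝔮 := by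
    intro x h1 h2; rw [h𝔮]; exact ⟨h1, h2⟩
  -- brackets of elements of 𝔮 lie in 𝔩
  have hqq : ∀ a ∈ 𝔮, ∀ b ∈ 𝔮, ⁅a, b⁆ ∈ 𝔩 := by
    intro a ha b hb
    rw [h𝔩]
    exact Submodule.subset_span ⟨a, ha, b, hb, rfl⟩
  -- [𝔪, 𝔮] ⊆ 𝔮
  have hmq : ∀ m ∈ 𝔪, ∀ q ∈ 𝔮, ⁅m, q⁆ ∈ 𝔮 := by
    intro m hm q hq
    exact hmk𝔮 (𝔰.lie_mem (hmem𝔪 hm).1 (hmem𝔮 hq).1)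
      (h𝔨𝔭 m (hmem𝔪 hm).2 q (hmem𝔮 hq).2)
  -- symmetry of the Killing form
  have ksymm : ∀ x y : 𝔤, killingForm ℝ 𝔤 x y = killingForm ℝ 𝔤 y x :=
    fun x y => LieModule.traceForm_comm ℝ 𝔤 𝔤 x y
  -- 𝔲 membership
  have hmem𝔲 : ∀ {x : 𝔤}, x ∈ 𝔲 → x ∈ 𝔪 ∧ ∀ l ∈ 𝔩, killingForm ℝ 𝔤 l x = 0 := by
    intro x hx; rw [h𝔲] at hx; exact ⟨hx.1, fun l hl => hx.2 l hl⟩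
  have hmk𝔲 : ∀ {x : 𝔤}, x ∈ 𝔪 → (∀ l ∈ 𝔩, killingForm ℝ 𝔤 l x = 0) → x ∈ 𝔲 := by
    intro x h1 h2; rw [h𝔲]; exact ⟨h1, fun l hl => h2 l hl⟩
  -- Claim 1 : [𝔪, 𝔩] ⊆ 𝔩
  have hml : ∀ m ∈ 𝔪, ∀ y ∈ 𝔩, ⁅m, y⁆ ∈ 𝔩 := by
    intro m hm
    have : Submodule.span ℝ {z | ∃ x ∈ 𝔮, ∃ y ∈ 𝔮, z = ⁅x, y⁆} ≤
        Submodule.comap (ad ℝ 𝔤 m) 𝔩 := by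
      rw [Submodule.span_le]
      rintro z ⟨a, ha, b, hb, rfl⟩
      show ⁅m, ⁅a, b⁆⁆ ∈ 𝔩
      rw [leibniz_lie]
      exact 𝔩.add_mem (hqq _ (hmq m hm a ha) _ hb) (hqq _ ha _ (hmq m hm b hb))
    exact fun y hy => this (h𝔩 ▸ hy)
  -- [𝔮, 𝔩] ⊆ 𝔮
  have hql : ∀ q ∈ 𝔮, ∀ y ∈ 𝔩, ⁅q, y⁆ ∈ 𝔮 := by
    intro q hq
    have : 𝔩 ≤ Submodule.comap (ad ℝ 𝔤 q) 𝔮 := by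
      rw [h𝔩, Submodule.span_le]
      rintro z ⟨a, ha, b, hb, rfl⟩
      show ⁅q, ⁅a, b⁆⁆ ∈ 𝔮
      rw [leibniz_lie]
      refine 𝔮.add_mem (hmq _ (h𝔩𝔪 (hqq _ hq _ ha)) _ hb) ?_
      rw [← lie_skew]
      exact 𝔮.neg_mem (hmq _ (h𝔩𝔪 (hqq _ hq _ hb)) _ ha)
    exact fun y hy => this hy
  -- [𝔲, 𝔮] = 0
  have huq0 : ∀ u ∈ 𝔲, ∀ q ∈ 𝔮, ⁅u, q⁆ = 0 := by
    intro u hu q hq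
    have hu𝔪 := (hmem𝔲 hu).1
    have h1 : ⁅u, q⁆ ∈ 𝔮 := hmq u hu𝔪 q hq
    by_contra hne
    have hpos := h𝔭pos _ (hmem𝔮 h1).2 hne
    have hzero : killingForm ℝ 𝔤 ⁅u, q⁆ ⁅u, q⁆ = 0 := by
      rw [LieModule.traceForm_apply_lie_apply, ksymm]
      exact (hmem𝔲 hu).2 _ (hqq q hq _ h1)
    rw [hzero] at hpos
    exact lt_irrefl 0 hpos
  -- [𝔲, 𝔩] = 0
  have hul0 : ∀ u ∈ 𝔲, ∀ y ∈ 𝔩, ⁅u, y⁆ = 0 := by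
    intro u hu
    have : 𝔩 ≤ LinearMap.ker (ad ℝ 𝔤 u) := by
      rw [h𝔩, Submodule.span_le]
      rintro z ⟨a, ha, b, hb, rfl⟩
      simp only [Set.mem_setOf_eq, SetLike.mem_coe, LinearMap.mem_ker, ad_apply]
      rw [leibniz_lie, huq0 u hu a ha, huq0 u hu b hb]
      simp
    intro y hy
    simpa using this hy
  -- [𝔲, 𝔥] = 0
  have huh0 : ∀ u ∈ 𝔲, ∀ y ∈ 𝔥, ⁅u, y⁆ = 0 := by
    intro u hu y hy
    rw [h𝔥] at hy
    obtain ⟨l, hl, q, hq, rfl⟩ := Submodule.mem_sup.mp hy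
    rw [lie_add, hul0 u hu l hl, huq0 u hu q hq, add_zero]
  -- [𝔪, 𝔲] ⊆ 𝔲
  have hmu : ∀ m ∈ 𝔪, ∀ u ∈ 𝔲, ⁅m, u⁆ ∈ 𝔲 := by
    intro m hm u hu
    have hu𝔪 := (hmem𝔲 hu).1
    refine hmk𝔲 (hmk𝔪 (𝔰.lie_mem (hmem𝔪 hm).1 (hmem𝔪 hu𝔪).1)
      (𝔨.lie_mem (hmem𝔪 hm).2 (hmem𝔪 hu𝔪).2)) ?_
    intro l hl
    rw [ksymm, LieModule.traceForm_apply_lie_apply', ksymm]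
    rw [(hmem𝔲 hu).2 _ (hml m hm l hl), neg_zero]
  -- decomposition of elements of 𝔰
  have hdecomp : ∀ x ∈ 𝔰, ∃ m ∈ 𝔪, ∃ q ∈ 𝔮, x = m + q := by
    intro x hx
    have hx' : x ∈ 𝔨.toSubmodule ⊔ 𝔭 := by
      rw [hdec.codisjoint.eq_top]; trivial
    obtain ⟨k, hk, p, hp, hkp⟩ := Submodule.mem_sup.mp hx'
    obtain ⟨hks, hps⟩ := h𝔰 x hx k hk p hp hkp.symm
    exact ⟨k, hmk𝔪 hks hk, p, hmk𝔮 hps hp, hkp.symm⟩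
  -- [𝔰, 𝔲] ⊆ 𝔲
  have hsu : ∀ x ∈ 𝔰, ∀ u ∈ 𝔲, ⁅x, u⁆ ∈ 𝔲 := by
    intro x hx u hu
    obtain ⟨m, hm, q, hq, rfl⟩ := hdecomp x hx
    rw [add_lie]
    refine 𝔲.add_mem (hmu m hm u hu) ?_
    rw [← lie_skew, huq0 u hu q hq, neg_zero]
    exact 𝔲.zero_mem
  -- 𝔥 ⊆ 𝔰
  have hl𝔰 : 𝔩 ≤ 𝔰.toSubmodule := fun x hx => (hmem𝔪 (h𝔩𝔪 hx)).1
  have hq𝔰 : 𝔮 ≤ 𝔰.toSubmodule := fun x hx => (hmem𝔮 hx).1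
  have hh𝔰 : 𝔥 ≤ 𝔰.toSubmodule := by rw [h𝔥]; exact sup_le hl𝔰 hq𝔰
  -- [𝔰, 𝔥] ⊆ 𝔥
  have hl𝔥 : 𝔩 ≤ 𝔥 := by rw [h𝔥]; exact le_sup_left
  have hq𝔥 : 𝔮 ≤ 𝔥 := by rw [h𝔥]; exact le_sup_right
  have hsh : ∀ x ∈ 𝔰, ∀ y ∈ 𝔥, ⁅x, y⁆ ∈ 𝔥 := by
    intro x hx y hy
    obtain ⟨m, hm, q, hq, rfl⟩ := hdecomp x hx
    rw [h𝔥] at hy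
    obtain ⟨l, hl, p, hp, rfl⟩ := Submodule.mem_sup.mp hy
    rw [add_lie, lie_add, lie_add]
    refine 𝔥.add_mem (𝔥.add_mem (hl𝔥 (hml m hm l hl)) (hq𝔥 (hmq m hm p hp)))
      (𝔥.add_mem (hq𝔥 (hql q hq l hl)) (hl𝔥 (hqq q hq p hp)))
  -- 𝔲 ≤ 𝔪
  have hu𝔪' : 𝔲 ≤ 𝔪.toSubmodule := fun x hx => (hmem𝔲 hx).1
  -- the Killing form restricted to 𝔩 is nondegenerate (negative definite)
  have hrefl : (killingForm ℝ 𝔤).IsRefl :=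
    (LieModule.traceForm_isSymm ℝ 𝔤 𝔤).isRefl
  have hnd : ((killingForm ℝ 𝔤).restrict 𝔩).Nondegenerate := by
    constructor
    all_goals
      rintro ⟨x, hx⟩ hall
      have hx𝔨 : x ∈ 𝔨 := (hmem𝔪 (h𝔩𝔪 hx)).2
      have h0 : killingForm ℝ 𝔤 x x = 0 := hall ⟨x, hx⟩
      ext
      by_contra hne
      exact absurd h0 (ne_of_lt (h𝔨neg x hx𝔨 hne))
  have hcompl : IsCompl 𝔩 ((killingForm ℝ 𝔤).orthogonal 𝔩) :=
    (killingForm ℝ 𝔤).isCompl_orthogonal_of_restrict_nondegenerate hrefl hnd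
  -- 𝔪 ⊆ 𝔩 ⊔ 𝔲
  have hmlu : 𝔪.toSubmodule ≤ 𝔩 ⊔ 𝔲 := by
    intro m hm
    have hm' : m ∈ 𝔩 ⊔ (killingForm ℝ 𝔤).orthogonal 𝔩 := by
      rw [hcompl.codisjoint.eq_top]; trivial
    obtain ⟨l, hl, w, hw, rfl⟩ := Submodule.mem_sup.mp hm'
    have hw𝔪 : w ∈ 𝔪 := by
      have : (l + w) - l ∈ 𝔪 := 𝔪.sub_mem hm (h𝔩𝔪 hl)
      simpa using this
    have hw𝔲 : w ∈ 𝔲 := by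
      rw [h𝔲]; exact ⟨hw𝔪, hw⟩
    exact Submodule.add_mem _ (Submodule.mem_sup_left hl) (Submodule.mem_sup_right hw𝔲)
  -- 𝔰 = 𝔲 ⊔ 𝔥
  have hu𝔰 : 𝔲 ≤ 𝔰.toSubmodule := fun x hx => (hmem𝔪 (hu𝔪' hx)).1
  have hsup : 𝔰.toSubmodule = 𝔲 ⊔ 𝔥 := by
    refine le_antisymm ?_ (sup_le hu𝔰 hh𝔰)
    intro x hx
    obtain ⟨m, hm, q, hq, rfl⟩ := hdecomp x hx
    have hm' : m ∈ 𝔲 ⊔ 𝔥 := by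
      have := hmlu hm
      exact sup_le (le_trans hl𝔥 le_sup_right) le_sup_left this
    exact Submodule.add_mem _ hm' (Submodule.mem_sup_right (hq𝔥 hq))
  -- 𝔲 ⊓ 𝔥 = ⊥
  have hinf : 𝔲 ⊓ 𝔥 = ⊥ := by
    rw [eq_bot_iff]
    rintro x ⟨hxu, hxh⟩
    rw [h𝔥] at hxh
    obtain ⟨l, hl, q, hq, hx⟩ := Submodule.mem_sup.mp hxh
    have hx𝔨 : x ∈ 𝔨 := (hmem𝔪 (hu𝔪' hxu)).2
    have hq𝔨 : q ∈ 𝔨.toSubmodule := by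
      have : x - l ∈ 𝔨 := 𝔨.sub_mem hx𝔨 (hmem𝔪 (h𝔩𝔪 hl)).2
      rw [← hx] at this
      simpa using this
    have hq0 : q = 0 := by
      have : q ∈ 𝔨.toSubmodule ⊓ 𝔭 := ⟨hq𝔨, (hmem𝔮 hq).2⟩
      rw [hdec.inf_eq_bot] at this
      simpa using this
    rw [hq0, add_zero] at hx
    subst hx
    have h0 : killingForm ℝ 𝔤 l l = 0 := (hmem𝔲 hxu).2 l hl
    by_contra hne
    have := h𝔨neg l (hmem𝔪 (h𝔩𝔪 hl)).2 (by simpa using hne)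
    rw [h0] at this
    exact lt_irrefl 0 this
  exact ⟨hml, ⟨hh𝔰, hsh⟩, ⟨hu𝔪', hmu, hsu⟩, hsup, hinf, huh0⟩
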